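/- Let p, C, τ be real numbers with p > 0, τ ≥ 0, and let ω > 0 satisfy C·e^{−iωτ} = ω² − i·pω (equivalently λ = iω is a root of λ² + pλ + C e^{−λτ} = 0). Then the derivative in λ of the characteristic function at this root, namely 2(iω) + p − Cτ·e^{−iωτ}, is nonzero; indeed its imaginary part equals ω(2 + τp) > 0. -/
import Mathlib

/-- Nondegeneracy of the characteristic function at a purely imaginary root:
the λ-derivative 2iω + p − Cτe^{−iωτ} is nonzero, its imaginary part being ω(2+τp) > 0. -/
theorem stmt_12 (p C τ ω : ℝ) (hp : 0 < p) (hτ : 0 ≤ τ) (hω : 0 < ω)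
    (heq : (C : ℂ) * Complex.exp (-(Complex.I * (ω : ℂ)) * (τ : ℂ)) =
        ((ω ^ 2 : ℝ) : ℂ) - Complex.I * ((p * ω : ℝ) : ℂ)) :
    (2 * (Complex.I * (ω : ℂ)) + (p : ℂ) -
        (C : ℂ) * (τ : ℂ) * Complex.exp (-(Complex.I * (ω : ℂ)) * (τ : ℂ))) ≠ 0 ∧
    (2 * (Complex.I * (ω : ℂ)) + (p : ℂ) -
        (C : ℂ) * (τ : ℂ) * Complex.exp (-(Complex.I * (ω : ℂ)) * (τ : ℂ))).im =
      ω * (2 + τ * p) ∧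
    0 < ω * (2 + τ * p) := by
  have hterm : (C : ℂ) * (τ : ℂ) * Complex.exp (-(Complex.I * (ω : ℂ)) * (τ : ℂ))
      = (τ : ℂ) * (((ω ^ 2 : ℝ) : ℂ) - Complex.I * ((p * ω : ℝ) : ℂ)) := by
    rw [mul_right_comm, heq]; ring
  have him : (2 * (Complex.I * (ω : ℂ)) + (p : ℂ) -
        (C : ℂ) * (τ : ℂ) * Complex.exp (-(Complex.I * (ω : ℂ)) * (τ : ℂ))).im
      = ω * (2 + τ * p) := by
    rw [hterm]
    simp [Complex.sub_im, Complex.add_im, Complex.mul_im, ← Complex.ofReal_pow]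
    ring
  have hpos : 0 < ω * (2 + τ * p) := by positivity
  refine ⟨?_, him, hpos⟩
  intro h
  rw [h] at him
  simp at him
  rcases him with h1 | h1
  · exact absurd h1 (ne_of_gt hω)
  · nlinarith
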